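/- Suppose F2 is atomless conditionally to F1. Then there exists an F2-measurable random variable U : Ω → [0,1] that is uniformly distributed on [0,1] (i.e., the law of U under P is Lebesgue measure on [0,1]) and is independent of the σ-algebra F1. -/

import Mathlib

open MeasureTheory ProbabilityTheory Set Filter
open scoped ENNReal Topology

set_option linter.unusedSectionVars false

/-- The conditional expectation (under `P`, defined on `F2`) of the indicator of `A`
given the sub-σ-algebra `F1`. -/
noncomputable def cexpInd {Ω : Type*} (F1 F2 : MeasurableSpace Ω) (P : @Measure Ω F2)
    (A : Set Ω) : Ω → ℝ :=
  P[A.indicator (fun _ => (1 : ℝ)) | F1]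

/-- `F2` is atomless conditionally to `F1`: for every `A ∈ F2` there is `B ∈ F2`, `B ⊆ A`,
with `0 < E[1_B | F1] < E[1_A | F1]` almost surely on the set `{E[1_A | F1] > 0}`. -/
def CondAtomless {Ω : Type*} (F1 F2 : MeasurableSpace Ω) (P : @Measure Ω F2) : Prop :=
  ∀ A : Set Ω, MeasurableSet[F2] A → ∃ B : Set Ω, MeasurableSet[F2] B ∧ B ⊆ A ∧
    ∀ᵐ ω ∂P, 0 < cexpInd F1 F2 P A ω →
      0 < cexpInd F1 F2 P B ω ∧ cexpInd F1 F2 P B ω < cexpInd F1 F2 P A ω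


section Basics

variable {Ω : Type*} {F1 F2 : MeasurableSpace Ω} (hle : F1 ≤ F2)
  (P : @Measure Ω F2) [IsProbabilityMeasure P]

noncomputable def ci (F1 : MeasurableSpace Ω) (P : @Measure Ω F2) (A : Set Ω) : Ω → ℝ :=
  P[A.indicator (fun _ => (1 : ℝ)) | F1]

variable {P}
include hle

lemma intInd {A : Set Ω} (hA : MeasurableSet[F2] A) :
    Integrable (A.indicator (fun _ => (1 : ℝ))) P :=
  (integrable_const 1).indicator hA

instance : SigmaFinite (P.trim hle) := by
  have : IsFiniteMeasure (P.trim hle) := isFiniteMeasure_trim hle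
  infer_instance

lemma ci_sm (A : Set Ω) : StronglyMeasurable[F1] (ci F1 P A) :=
  stronglyMeasurable_condExp

lemma ci_meas (A : Set Ω) : Measurable[F1] (ci F1 P A) :=
  (ci_sm hle A).measurable

lemma ci_nonneg (A : Set Ω) : 0 ≤ᵐ[P] ci F1 P A :=
  condExp_nonneg (ae_of_all _ fun ω => Set.indicator_nonneg (fun _ _ => zero_le_one) ω)

lemma ci_le_one {A : Set Ω} (hA : MeasurableSet[F2] A) :
    ci F1 P A ≤ᵐ[P] fun _ => (1 : ℝ) := by
  calc ci F1 P A ≤ᵐ[P] P[(fun _ => (1:ℝ)) | F1] :=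
        condExp_mono (intInd hle hA) (integrable_const 1)
          (ae_of_all _ fun ω => Set.indicator_le_self' (fun _ _ => zero_le_one) ω)
    _ =ᵐ[P] fun _ => (1 : ℝ) := by rw [condExp_const hle]

lemma ci_mono {A B : Set Ω} (hA : MeasurableSet[F2] A) (hB : MeasurableSet[F2] B)
    (hBA : B ⊆ A) : ci F1 P B ≤ᵐ[P] ci F1 P A :=
  condExp_mono (intInd hle hB) (intInd hle hA)
    (ae_of_all _ fun ω => Set.indicator_le_indicator_of_subset hBA (fun _ => zero_le_one) ω)

lemma setIntegral_ci {A C : Set Ω} (hA : MeasurableSet[F2] A) (hC : MeasurableSet[F1] C) :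
    ∫ ω in C, ci F1 P A ω ∂P = (P (A ∩ C)).toReal := by
  rw [ci, setIntegral_condExp hle (intInd hle hA) hC, integral_indicator hA,
    setIntegral_const,
    smul_eq_mul, mul_one, measureReal_def, Measure.restrict_apply hA]

lemma integral_ci {A : Set Ω} (hA : MeasurableSet[F2] A) :
    ∫ ω, ci F1 P A ω ∂P = (P A).toReal := by
  have := setIntegral_ci (P := P) hle hA (@MeasurableSet.univ Ω F1)
  rw [Measure.restrict_univ, Set.inter_univ] at this
  exact this

lemma ci_empty : ci F1 P (∅ : Set Ω) =ᵐ[P] fun _ => (0 : ℝ) := by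
  rw [ci]
  simp only [Set.indicator_empty']
  rw [condExp_zero]
  exact ae_of_all _ fun ω => rfl

lemma ci_univ : ci F1 P (univ : Set Ω) =ᵐ[P] fun _ => (1 : ℝ) := by
  rw [ci]
  simp only [Set.indicator_univ]
  rw [condExp_const hle]

lemma ci_union {A B : Set Ω} (hA : MeasurableSet[F2] A) (hB : MeasurableSet[F2] B)
    (hAB : Disjoint A B) :
    ci F1 P (A ∪ B) =ᵐ[P] ci F1 P A + ci F1 P B := by
  rw [ci, ci, ci]
  have : (A ∪ B).indicator (fun _ => (1:ℝ)) =
      A.indicator (fun _ => (1:ℝ)) + B.indicator (fun _ => (1:ℝ)) :=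
    Set.indicator_union_of_disjoint hAB _
  rw [this]
  exact condExp_add (intInd hle hA) (intInd hle hB) F1

lemma ci_diff {A B : Set Ω} (hA : MeasurableSet[F2] A) (hB : MeasurableSet[F2] B)
    (hBA : B ⊆ A) :
    ci F1 P (A \ B) =ᵐ[P] ci F1 P A - ci F1 P B := by
  have h1 : ci F1 P (B ∪ A \ B) =ᵐ[P] ci F1 P B + ci F1 P (A \ B) :=
    ci_union hle hB (hA.diff hB) disjoint_sdiff_right
  rw [Set.union_diff_cancel hBA] at h1
  filter_upwards [h1] with ω hω
  simp only [Pi.sub_apply, Pi.add_apply] at *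
  linarith

lemma ci_inter_F1 {B C : Set Ω} (hB : MeasurableSet[F2] B) (hC : MeasurableSet[F1] C) :
    ci F1 P (B ∩ C) =ᵐ[P] C.indicator (ci F1 P B) := by
  rw [ci, ci]
  have : (B ∩ C).indicator (fun _ => (1:ℝ)) = C.indicator (B.indicator fun _ => (1:ℝ)) := by
    rw [Set.indicator_indicator, Set.inter_comm]
  rw [this]
  exact condExp_indicator (intInd hle hB) hC

lemma ci_zero_of_null {A : Set Ω} (hA : P A = 0) : ci F1 P A =ᵐ[P] fun _ => (0 : ℝ) := by
  have h0 : A.indicator (fun _ => (1:ℝ)) =ᵐ[P] (fun _ => (0:ℝ)) := by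
    have : ∀ᵐ ω ∂P, ω ∉ A := by
      rw [ae_iff]
      simpa using hA
    filter_upwards [this] with ω hω
    simp [Set.indicator_of_notMem hω]
  calc ci F1 P A =ᵐ[P] P[(fun _ => (0:ℝ))|F1] := condExp_congr_ae h0
    _ =ᵐ[P] fun _ => (0:ℝ) := by rw [condExp_const hle]


lemma ci_char {B : Set Ω} (hB : MeasurableSet[F2] B) {g : Ω → ℝ}
    (hgm : Measurable[F1] g) (hg0 : ∀ ω, 0 ≤ g ω) (hg1 : ∀ ω, g ω ≤ 1)
    (h : ∀ C : Set Ω, MeasurableSet[F1] C → ∫ ω in C, g ω ∂P = (P (B ∩ C)).toReal) :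
    g =ᵐ[P] ci F1 P B := by
  have hgm2 : Measurable[F2] g := hgm.mono hle le_rfl
  have hgint : Integrable g P := by
    refine (integrable_const (1:ℝ)).mono' hgm2.aestronglyMeasurable ?_
    exact ae_of_all _ fun ω => by rw [Real.norm_eq_abs, abs_of_nonneg (hg0 ω)]; exact hg1 ω
  refine ae_eq_condExp_of_forall_setIntegral_eq hle (intInd hle hB)
    (fun s _ _ => hgint.integrableOn) (fun s hs _ => ?_) ?_
  · rw [h s hs, integral_indicator hB, setIntegral_const, smul_eq_mul, mul_one,
      measureReal_def, Measure.restrict_apply hB]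
  · exact StronglyMeasurable.aestronglyMeasurable (hgm.stronglyMeasurable)

lemma ci_iUnion_le {B : ℕ → Set Ω} (hB : ∀ n, MeasurableSet[F2] (B n)) (hmono : Monotone B)
    {h : Ω → ℝ} (hbound : ∀ n, ci F1 P (B n) ≤ᵐ[P] h) :
    ci F1 P (⋃ n, B n) ≤ᵐ[P] h := by
  classical
  set gn : ℕ → Ω → ℝ := fun n ω => max 0 (min (ci F1 P (B n) ω) 1) with hgn
  have hgnm : ∀ n, Measurable[F1] (gn n) := fun n =>
    measurable_const.max ((ci_meas (P := P) hle (B n)).min measurable_const)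
  have hgn0 : ∀ n ω, 0 ≤ gn n ω := fun n ω => le_max_left _ _
  have hgn1 : ∀ n ω, gn n ω ≤ 1 := fun n ω => max_le zero_le_one (min_le_right _ _)
  have hgn_ae : ∀ n, gn n =ᵐ[P] ci F1 P (B n) := by
    intro n
    filter_upwards [ci_nonneg hle (B n), ci_le_one hle (hB n)] with ω h0 h1
    simp only [hgn, Pi.zero_apply] at *
    rw [min_eq_left h1, max_eq_right h0]
  set g : Ω → ℝ := fun ω => ⨆ n, gn n ω with hg
  have hbdd : ∀ ω, BddAbove (Set.range fun n => gn n ω) :=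
    fun ω => ⟨1, by rintro x ⟨n, rfl⟩; exact hgn1 n ω⟩
  have hgm : Measurable[F1] g := by
    exact Measurable.iSup (fun n => hgnm n)
  have hg0 : ∀ ω, 0 ≤ g ω := fun ω => le_trans (hgn0 0 ω) (le_ciSup (hbdd ω) 0)
  have hg1 : ∀ ω, g ω ≤ 1 := fun ω => ciSup_le fun n => hgn1 n ω
  have hmono_ae : ∀ᵐ ω ∂P, ∀ n, gn n ω ≤ gn (n+1) ω := by
    rw [ae_all_iff]
    intro n
    filter_upwards [ci_mono hle (hB (n+1)) (hB n) (hmono (Nat.le_succ n))] with ω hω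
    exact max_le_max le_rfl (min_le_min hω le_rfl)
  have htends : ∀ᵐ ω ∂P, Tendsto (fun n => gn n ω) atTop (𝓝 (g ω)) := by
    filter_upwards [hmono_ae] with ω hω
    exact tendsto_atTop_ciSup (monotone_nat_of_le_succ hω) (hbdd ω)
  have key : ∀ C : Set Ω, MeasurableSet[F1] C → ∫ ω in C, g ω ∂P = (P ((⋃ n, B n) ∩ C)).toReal := by
    intro C hC
    have hCf2 : MeasurableSet[F2] C := hle _ hC
    have h1 : Tendsto (fun n => ∫ ω in C, gn n ω ∂P) atTop (𝓝 (∫ ω in C, g ω ∂P)) := by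
      refine tendsto_integral_of_dominated_convergence (fun _ => (1:ℝ))
        (fun n => ((hgnm n).mono hle le_rfl).aestronglyMeasurable) (integrable_const 1)
        (fun n => ae_of_all _ fun ω => by
          rw [Real.norm_eq_abs, abs_of_nonneg (hgn0 n ω)]; exact hgn1 n ω)
        (ae_restrict_of_ae htends)
    have h2 : ∀ n, ∫ ω in C, gn n ω ∂P = (P (B n ∩ C)).toReal := by
      intro n
      rw [setIntegral_congr_ae hCf2 ((hgn_ae n).mono fun ω hω _ => hω)]
      exact setIntegral_ci hle (hB n) hC
    have h3 : Tendsto (fun n => (P (B n ∩ C)).toReal) atTop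
        (𝓝 ((P ((⋃ n, B n) ∩ C)).toReal)) := by
      have : Tendsto (fun n => P (B n ∩ C)) atTop (𝓝 (P (⋃ n, B n ∩ C))) :=
        tendsto_measure_iUnion_atTop fun i j hij => Set.inter_subset_inter (hmono hij) le_rfl
      rw [← Set.iUnion_inter] at this
      exact (ENNReal.tendsto_toReal (measure_ne_top P _)).comp this
    simp_rw [h2] at h1
    exact tendsto_nhds_unique h1 h3
  have hgeq : g =ᵐ[P] ci F1 P (⋃ n, B n) :=
    ci_char hle (MeasurableSet.iUnion hB) hgm hg0 hg1 key
  have hgle : g ≤ᵐ[P] h := by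
    have : ∀ᵐ ω ∂P, ∀ n, gn n ω ≤ h ω := by
      rw [ae_all_iff]
      intro n
      filter_upwards [hgn_ae n, hbound n] with ω h1 h2
      rw [h1]; exact h2
    filter_upwards [this] with ω hω
    exact ciSup_le hω
  filter_upwards [hgeq, hgle] with ω h1 h2
  rw [← h1]; exact h2

lemma P_inter_pos {B C : Set Ω} (hB : MeasurableSet[F2] B) (hC : MeasurableSet[F1] C)
    (hCpos : 0 < P C) (hpos : ∀ᵐ ω ∂P, ω ∈ C → 0 < ci F1 P B ω) :
    0 < P (B ∩ C) := by
  by_contra hc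
  push_neg at hc
  have h0 : P (B ∩ C) = 0 := le_antisymm hc bot_le
  have h1 : ci F1 P (B ∩ C) =ᵐ[P] fun _ => (0:ℝ) := ci_zero_of_null (P := P) hle h0
  have h2 := ci_inter_F1 (P := P) hle hB hC
  have : ∀ᵐ ω ∂P, ω ∉ C := by
    filter_upwards [h1, h2, hpos] with ω e1 e2 e3
    intro hω
    have := e2.symm.trans e1
    rw [Set.indicator_of_mem hω] at this
    exact absurd this (ne_of_gt (e3 hω))
  have hC0 : P C = 0 := by
    rw [← compl_compl C] at *
    exact measure_eq_zero_iff_ae_notMem.mpr this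
  exact absurd hC0 hCpos.ne'


def CondAtomless' {Ω : Type*} (F1 F2 : MeasurableSpace Ω) (P : @Measure Ω F2) : Prop :=
  ∀ A : Set Ω, MeasurableSet[F2] A → ∃ B : Set Ω, MeasurableSet[F2] B ∧ B ⊆ A ∧
    ∀ᵐ ω ∂P, 0 < ci F1 P A ω →
      0 < ci F1 P B ω ∧ ci F1 P B ω < ci F1 P A ω

lemma shrink (hatom : CondAtomless' F1 F2 P) {A : Set Ω} (hA : MeasurableSet[F2] A) (n : ℕ) :
    ∃ B : Set Ω, MeasurableSet[F2] B ∧ B ⊆ A ∧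
      (ci F1 P B ≤ᵐ[P] fun ω => (2:ℝ)⁻¹^n * ci F1 P A ω) ∧
      (∀ᵐ ω ∂P, 0 < ci F1 P A ω → 0 < ci F1 P B ω) := by
  induction n with
  | zero =>
    refine ⟨A, hA, subset_rfl, ?_, ae_of_all _ fun ω h => h⟩
    exact ae_of_all _ fun ω => by simp
  | succ n ih =>
    obtain ⟨D, hD, hDA, hDbd, hDpos⟩ := ih
    obtain ⟨B, hBm, hBD, hBatom⟩ := hatom D hD
    set C : Set Ω := {ω | ci F1 P B ω ≤ ci F1 P D ω / 2} with hC
    have hCm : MeasurableSet[F1] C :=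
      measurableSet_le (ci_meas (P := P) hle B) ((ci_meas (P := P) hle D).div_const 2)
    set E : Set Ω := (B ∩ C) ∪ ((D \ B) ∩ Cᶜ) with hE
    have hD'm : MeasurableSet[F2] (D \ B) := hD.diff hBm
    have hEm : MeasurableSet[F2] E :=
      ((hBm.inter (hle _ hCm)).union (hD'm.inter (hle _ hCm.compl)))
    have hED : E ⊆ D := by
      rintro ω (⟨h1, _⟩ | ⟨h1, _⟩)
      exacts [hBD h1, h1.1]
    have hdisj : Disjoint (B ∩ C) ((D \ B) ∩ Cᶜ) :=
      disjoint_compl_right.mono Set.inter_subset_right Set.inter_subset_right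
    have e1 : ci F1 P E =ᵐ[P] ci F1 P (B ∩ C) + ci F1 P ((D \ B) ∩ Cᶜ) :=
      ci_union hle (hBm.inter (hle _ hCm)) (hD'm.inter (hle _ hCm.compl)) hdisj
    have e2 : ci F1 P (B ∩ C) =ᵐ[P] C.indicator (ci F1 P B) := ci_inter_F1 (P := P) hle hBm hCm
    have e3 : ci F1 P ((D \ B) ∩ Cᶜ) =ᵐ[P] Cᶜ.indicator (ci F1 P (D \ B)) :=
      ci_inter_F1 (P := P) hle hD'm hCm.compl
    have e4 : ci F1 P (D \ B) =ᵐ[P] ci F1 P D - ci F1 P B := ci_diff hle hD hBm hBD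
    have eBD : ci F1 P B ≤ᵐ[P] ci F1 P D := ci_mono hle hD hBm hBD
    refine ⟨E, hEm, hED.trans hDA, ?_, ?_⟩
    · filter_upwards [e1, e2, e3, e4, hDbd, ci_nonneg (P := P) hle B,
        ci_nonneg (P := P) hle A, eBD] with ω h1 h2 h3 h4 h5 h6 h7 h8
      simp only [Pi.add_apply, Pi.sub_apply] at *
      rw [h1, h2, h3]
      by_cases hωC : ω ∈ C
      · rw [Set.indicator_of_mem hωC, Set.indicator_of_notMem (by simp [hωC])]
        have : ci F1 P B ω ≤ ci F1 P D ω / 2 := hωC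
        rw [pow_succ]
        calc ci F1 P B ω + 0 ≤ ci F1 P D ω / 2 := by rw [add_zero]; exact this
          _ ≤ ((2:ℝ)⁻¹^n * ci F1 P A ω) / 2 := by linarith
          _ = (2:ℝ)⁻¹^n * (2:ℝ)⁻¹ * ci F1 P A ω := by ring
      · rw [Set.indicator_of_notMem hωC, Set.indicator_of_mem (by simp [hωC]), h4]
        have hgt : ci F1 P D ω / 2 < ci F1 P B ω := by
          simp only [C, Set.mem_setOf_eq, not_le] at hωC
          exact hωC
        rw [pow_succ]
        calc 0 + (ci F1 P D ω - ci F1 P B ω) ≤ ci F1 P D ω / 2 := by linarith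
          _ ≤ ((2:ℝ)⁻¹^n * ci F1 P A ω) / 2 := by linarith
          _ = (2:ℝ)⁻¹^n * (2:ℝ)⁻¹ * ci F1 P A ω := by ring
    · filter_upwards [e1, e2, e3, e4, hDpos, hBatom] with ω h1 h2 h3 h4 h5 h6
      intro hApos
      have hDp : 0 < ci F1 P D ω := h5 hApos
      obtain ⟨hb1, hb2⟩ := h6 hDp
      simp only [Pi.add_apply, Pi.sub_apply] at *
      rw [h1, h2, h3]
      by_cases hωC : ω ∈ C
      · rw [Set.indicator_of_mem hωC, Set.indicator_of_notMem (by simp [hωC])]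
        linarith
      · rw [Set.indicator_of_notMem hωC, Set.indicator_of_mem (by simp [hωC]), h4]
        linarith


lemma halving (hatom : CondAtomless' F1 F2 P) {A : Set Ω} (hA : MeasurableSet[F2] A) :
    ∃ B : Set Ω, MeasurableSet[F2] B ∧ B ⊆ A ∧
      ci F1 P B =ᵐ[P] fun ω => ci F1 P A ω / 2 := by
  classical
  set G : Set (Set Ω) := {B | MeasurableSet[F2] B ∧ B ⊆ A ∧
      ci F1 P B ≤ᵐ[P] fun ω => ci F1 P A ω / 2} with hG
  have hempty : (∅ : Set Ω) ∈ G := by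
    refine ⟨MeasurableSet.empty, Set.empty_subset _, ?_⟩
    filter_upwards [ci_empty (P := P) hle, ci_nonneg (P := P) hle A] with ω h1 h2
    rw [h1]
    simp only [Pi.zero_apply] at h2
    linarith
  have htoReal_le_one : ∀ B : Set Ω, (P B).toReal ≤ 1 := by
    intro B
    have := measure_mono (Set.subset_univ B) (μ := P)
    rw [measure_univ] at this
    exact le_trans (ENNReal.toReal_mono (by simp) this) (by simp)
  set S : Set Ω → Set ℝ := fun D => {r | ∃ B ∈ G, D ⊆ B ∧ r = (P B).toReal} with hS
  have hSne : ∀ D ∈ G, (S D).Nonempty := fun D hD => ⟨(P D).toReal, D, hD, subset_rfl, rfl⟩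
  have hSbdd : ∀ D, BddAbove (S D) := by
    intro D
    refine ⟨1, ?_⟩
    rintro r ⟨B, _, _, rfl⟩
    exact htoReal_le_one B
  have step : ∀ (n : ℕ) (D : Set Ω), D ∈ G →
      ∃ D', D' ∈ G ∧ D ⊆ D' ∧ sSup (S D) - 1/(n+1) < (P D').toReal := by
    intro n D hD
    have h1 : sSup (S D) - 1/(n+1) < sSup (S D) := by
      have : (0:ℝ) < 1/(n+1) := by positivity
      linarith
    obtain ⟨r, hr, hlt⟩ := exists_lt_of_lt_csSup (hSne D hD) h1
    obtain ⟨B, hB, hDB, rfl⟩ := hr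
    exact ⟨B, hB, hDB, hlt⟩
  choose! g hg1 hg2 hg3 using step
  set seq : ℕ → Set Ω := fun n => Nat.rec (∅ : Set Ω) (fun k Dk => g k Dk) n with hseq
  have hseqsucc : ∀ n, seq (n+1) = g n (seq n) := fun n => rfl
  have hmem : ∀ n, seq n ∈ G := by
    intro n
    induction n with
    | zero => exact hempty
    | succ k ih => rw [hseqsucc]; exact hg1 k _ ih
  have hmono : Monotone seq :=
    monotone_nat_of_le_succ fun n => by rw [hseqsucc]; exact hg2 n _ (hmem n)
  set Binf : Set Ω := ⋃ n, seq n with hBinf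
  have hBinfm : MeasurableSet[F2] Binf := MeasurableSet.iUnion fun n => (hmem n).1
  have hBinfA : Binf ⊆ A := Set.iUnion_subset fun n => (hmem n).2.1
  have hBinfle : ci F1 P Binf ≤ᵐ[P] fun ω => ci F1 P A ω / 2 :=
    ci_iUnion_le hle (fun n => (hmem n).1) hmono (fun n => (hmem n).2.2)
  have hBinfG : Binf ∈ G := ⟨hBinfm, hBinfA, hBinfle⟩
  refine ⟨Binf, hBinfm, hBinfA, ?_⟩
  by_contra hcon
  -- T : set where strict inequality holds
  set T : Set Ω := {ω | ci F1 P Binf ω < ci F1 P A ω / 2} with hT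
  have hTm : MeasurableSet[F1] T :=
    measurableSet_lt (ci_meas (P := P) hle Binf) ((ci_meas (P := P) hle A).div_const 2)
  have hT0 : P T ≠ 0 := by
    intro h0
    apply hcon
    have hnotT : ∀ᵐ ω ∂P, ω ∉ T := measure_eq_zero_iff_ae_notMem.mp h0
    filter_upwards [hnotT, hBinfle] with ω h1 h2
    have : ¬ ci F1 P Binf ω < ci F1 P A ω / 2 := h1
    linarith [le_antisymm h2 (not_lt.mp this)]
  set Tm : ℕ → Set Ω := fun m => {ω | 1/(m+1:ℝ) < ci F1 P A ω / 2 - ci F1 P Binf ω} with hTmdef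
  have hTmmeas : ∀ m, MeasurableSet[F1] (Tm m) := fun m =>
    measurableSet_lt measurable_const
      (((ci_meas (P := P) hle A).div_const 2).sub (ci_meas (P := P) hle Binf))
  have hTsub : T ⊆ ⋃ m, Tm m := by
    intro ω hω
    have : (0:ℝ) < ci F1 P A ω / 2 - ci F1 P Binf ω := by
      simp only [hT, Set.mem_setOf_eq] at hω
      linarith
    obtain ⟨m, hm⟩ := exists_nat_one_div_lt this
    exact Set.mem_iUnion.mpr ⟨m, hm⟩
  obtain ⟨m, hPm⟩ : ∃ m, P (Tm m) ≠ 0 := by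
    by_contra hall
    push_neg at hall
    exact hT0 (measure_mono_null hTsub (measure_iUnion_null hall))
  have hPmpos : 0 < P (Tm m) := pos_iff_ne_zero.mpr hPm
  set A' : Set Ω := A \ Binf with hA'
  have hA'm : MeasurableSet[F2] A' := hA.diff hBinfm
  have hA'eq : ci F1 P A' =ᵐ[P] ci F1 P A - ci F1 P Binf := ci_diff hle hA hBinfm hBinfA
  obtain ⟨n, hn⟩ : ∃ n : ℕ, (2:ℝ)⁻¹^n < 1/(m+1:ℝ) :=
    exists_pow_lt_of_lt_one (by positivity) (by norm_num)
  obtain ⟨B', hB'm, hB'A', hB'bd, hB'pos⟩ := shrink hle hatom hA'm n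
  set New : Set Ω := Binf ∪ (B' ∩ Tm m) with hNew
  have hNewm : MeasurableSet[F2] New := hBinfm.union (hB'm.inter (hle _ (hTmmeas m)))
  have hdisj : Disjoint Binf (B' ∩ Tm m) := by
    refine Set.disjoint_left.mpr fun ω hω hω2 => ?_
    exact (hB'A' hω2.1).2 hω
  have e1 : ci F1 P New =ᵐ[P] ci F1 P Binf + ci F1 P (B' ∩ Tm m) :=
    ci_union hle hBinfm (hB'm.inter (hle _ (hTmmeas m))) hdisj
  have e2 : ci F1 P (B' ∩ Tm m) =ᵐ[P] (Tm m).indicator (ci F1 P B') :=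
    ci_inter_F1 (P := P) hle hB'm (hTmmeas m)
  have hNewG : New ∈ G := by
    refine ⟨hNewm, Set.union_subset hBinfA fun ω hω => (hB'A' hω.1).1, ?_⟩
    filter_upwards [e1, e2, hB'bd, hA'eq, ci_le_one hle hA'm, ci_nonneg (P := P) hle A',
      hBinfle] with ω h1 h2 h3 h4 h5 h6
    intro h7
    simp only [Pi.add_apply, Pi.sub_apply] at *
    rw [h1, h2]
    by_cases hωT : ω ∈ Tm m
    · rw [Set.indicator_of_mem hωT]
      have hd : 1/(m+1:ℝ) < ci F1 P A ω / 2 - ci F1 P Binf ω := hωT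
      have : ci F1 P B' ω ≤ (2:ℝ)⁻¹^n * ci F1 P A' ω := h3
      have hle1 : (2:ℝ)⁻¹^n * ci F1 P A' ω ≤ (2:ℝ)⁻¹^n * 1 :=
        mul_le_mul_of_nonneg_left h5 (by positivity)
      nlinarith
    · rw [Set.indicator_of_notMem hωT, add_zero]
      exact h7
  have hposT : ∀ᵐ ω ∂P, ω ∈ Tm m → 0 < ci F1 P B' ω := by
    filter_upwards [hB'pos, hA'eq, ci_nonneg (P := P) hle A] with ω h1 h2 h3
    intro hωT
    have hd : 1/(m+1:ℝ) < ci F1 P A ω / 2 - ci F1 P Binf ω := hωT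
    simp only [Pi.sub_apply, Pi.zero_apply] at *
    have : 0 < ci F1 P A' ω := by
      rw [h2]
      have : (0:ℝ) < 1/(m+1:ℝ) := by positivity
      linarith
    exact h1 this
  have hPinter : 0 < P (B' ∩ Tm m) := P_inter_pos hle hB'm (hTmmeas m) hPmpos hposT
  -- contradiction via sup argument
  have hNewle : ∀ k : ℕ, (P New).toReal - 1/(k+1) < (P Binf).toReal := by
    intro k
    have hmemS : (P New).toReal ∈ S (seq k) :=
      ⟨New, hNewG, (Set.subset_iUnion seq k).trans Set.subset_union_left, rfl⟩
    have h1 : (P New).toReal ≤ sSup (S (seq k)) := le_csSup (hSbdd (seq k)) hmemS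
    have h2 : sSup (S (seq k)) - 1/(k+1) < (P (seq (k+1))).toReal := by
      rw [hseqsucc]; exact hg3 k _ (hmem k)
    have h3 : (P (seq (k+1))).toReal ≤ (P Binf).toReal :=
      ENNReal.toReal_mono (by simp [measure_ne_top]) (measure_mono (Set.subset_iUnion seq (k+1)))
    linarith
  have hlimle : (P New).toReal ≤ (P Binf).toReal := by
    have hlim : Tendsto (fun k : ℕ => (P New).toReal - 1/(k+1)) atTop
        (𝓝 ((P New).toReal - 0)) :=
      (tendsto_const_nhds).sub tendsto_one_div_add_atTop_nhds_zero_nat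
    rw [sub_zero] at hlim
    exact le_of_tendsto hlim (Filter.Eventually.of_forall fun k => (hNewle k).le)
  have hPNew : (P New).toReal = (P Binf).toReal + (P (B' ∩ Tm m)).toReal := by
    rw [hNew, measure_union hdisj (hB'm.inter (hle _ (hTmmeas m))),
      ENNReal.toReal_add (measure_ne_top _ _) (measure_ne_top _ _)]
  have : 0 < (P (B' ∩ Tm m)).toReal :=
    ENNReal.toReal_pos hPinter.ne' (measure_ne_top _ _)
  linarith


lemma dyadic (hatom : CondAtomless' F1 F2 P) :
    ∃ S : ℕ → ℕ → Set Ω,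
      (∀ n k, MeasurableSet[F2] (S n k)) ∧
      (∀ n k, S n k ⊆ S n (k+1)) ∧
      (∀ n, S n 0 = ∅) ∧
      (∀ n k, 2^n ≤ k → S n k = univ) ∧
      (∀ n k, k ≤ 2^n → ci F1 P (S n k) =ᵐ[P] fun _ => (k:ℝ)/2^n) ∧
      (∀ n k, S (n+1) (2*k) = S n k) := by
  classical
  have hex : ∀ A : Set Ω, ∃ B : Set Ω, MeasurableSet[F2] A →
      (MeasurableSet[F2] B ∧ B ⊆ A ∧ ci F1 P B =ᵐ[P] fun ω => ci F1 P A ω / 2) := by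
    intro A
    by_cases h : MeasurableSet[F2] A
    · obtain ⟨B, h1, h2, h3⟩ := halving hle hatom h
      exact ⟨B, fun _ => ⟨h1, h2, h3⟩⟩
    · exact ⟨∅, fun h' => absurd h' h⟩
  choose hs hhs using hex
  set Sf : ℕ → ℕ → Set Ω := fun n => Nat.rec (fun k => if k = 0 then (∅ : Set Ω) else univ)
    (fun _ Sn k => if k % 2 = 0 then Sn (k/2)
      else Sn (k/2) ∪ hs (Sn (k/2 + 1) \ Sn (k/2))) n with hSf
  have hstep : ∀ n k, Sf (n+1) k = if k % 2 = 0 then Sf n (k/2)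
      else Sf n (k/2) ∪ hs (Sf n (k/2 + 1) \ Sf n (k/2)) := fun n k => rfl
  have main : ∀ n, (∀ k, MeasurableSet[F2] (Sf n k)) ∧ (∀ k, Sf n k ⊆ Sf n (k+1)) ∧
      Sf n 0 = ∅ ∧ (∀ k, 2^n ≤ k → Sf n k = univ) ∧
      (∀ k, k ≤ 2^n → ci F1 P (Sf n k) =ᵐ[P] fun _ => (k:ℝ)/2^n) := by
    intro n
    induction n with
    | zero =>
      refine ⟨fun k => ?_, fun k => ?_, ?_, fun k hk => ?_, fun k hk => ?_⟩
      · by_cases h : k = 0 <;> simp [hSf, h]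
      · by_cases h : k = 0 <;> simp [hSf, h]
      · simp [hSf]
      · have : k ≠ 0 := by omega
        simp [hSf, this]
      · interval_cases k
        · simpa [hSf] using ci_empty (P := P) hle
        · simpa [hSf] using ci_univ hle
    | succ n ih =>
      obtain ⟨ihm, ihmono, ih0, ihuniv, ihval⟩ := ih
      have hmonoS : Monotone (Sf n) := monotone_nat_of_le_succ ihmono
      have hDm : ∀ j, MeasurableSet[F2] (Sf n (j+1) \ Sf n j) :=
        fun j => (ihm (j+1)).diff (ihm j)
      have hH := fun j => hhs (Sf n (j+1) \ Sf n j) (hDm j)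
      have hHm : ∀ j, MeasurableSet[F2] (hs (Sf n (j+1) \ Sf n j)) := fun j => (hH j).1
      have hHsub : ∀ j, hs (Sf n (j+1) \ Sf n j) ⊆ Sf n (j+1) \ Sf n j := fun j => (hH j).2.1
      have hDval : ∀ j, j + 1 ≤ 2^n →
          ci F1 P (Sf n (j+1) \ Sf n j) =ᵐ[P] fun _ => (1:ℝ)/2^n := by
        intro j hj
        have h1 := ci_diff (P := P) hle (ihm (j+1)) (ihm j) (ihmono j)
        filter_upwards [h1, ihval (j+1) hj, ihval j (by omega)] with ω e1 e2 e3
        simp only [Pi.sub_apply] at *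
        rw [e1, e2, e3]
        push_cast
        ring
      have hHval : ∀ j, j + 1 ≤ 2^n →
          ci F1 P (hs (Sf n (j+1) \ Sf n j)) =ᵐ[P] fun _ => (1:ℝ)/2^(n+1) := by
        intro j hj
        filter_upwards [(hH j).2.2, hDval j hj] with ω e1 e2
        rw [e1, e2]
        push_cast
        ring
      refine ⟨fun k => ?_, fun k => ?_, ?_, fun k hk => ?_, fun k hk => ?_⟩
      · rw [hstep]
        by_cases h : k % 2 = 0
        · rw [if_pos h]; exact ihm _
        · rw [if_neg h]; exact (ihm _).union (hHm _)
      · rw [hstep, hstep]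
        rcases Nat.even_or_odd k with ⟨j, hj⟩ | ⟨j, hj⟩
        · have h1 : k % 2 = 0 := by omega
          have h2 : ¬ ((k+1) % 2 = 0) := by omega
          have h3 : k / 2 = j := by omega
          have h4 : (k+1) / 2 = j := by omega
          rw [if_pos h1, if_neg h2, h3, h4]
          exact Set.subset_union_left
        · have h1 : ¬ (k % 2 = 0) := by omega
          have h2 : (k+1) % 2 = 0 := by omega
          have h3 : k / 2 = j := by omega
          have h4 : (k+1) / 2 = j + 1 := by omega
          rw [if_neg h1, if_pos h2, h3, h4]
          refine Set.union_subset (ihmono j) ?_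
          exact (hHsub j).trans Set.diff_subset
      · rw [hstep]
        norm_num
        exact ih0
      · rw [hstep]
        rcases Nat.even_or_odd k with ⟨j, hj⟩ | ⟨j, hj⟩
        · have h1 : k % 2 = 0 := by omega
          have h3 : k / 2 = j := by omega
          have h5 : 2^n ≤ j := by
            have : 2^(n+1) = 2 * 2^n := by ring
            omega
          rw [if_pos h1, h3]
          exact ihuniv j h5
        · have h1 : ¬ (k % 2 = 0) := by omega
          have h3 : k / 2 = j := by omega
          have h5 : 2^n ≤ j := by
            have : 2^(n+1) = 2 * 2^n := by ring
            omega
          rw [if_neg h1, h3, ihuniv j h5]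
          exact Set.univ_union _
      · rw [hstep]
        rcases Nat.even_or_odd k with ⟨j, hj⟩ | ⟨j, hj⟩
        · have h1 : k % 2 = 0 := by omega
          have h3 : k / 2 = j := by omega
          have h5 : j ≤ 2^n := by
            have : 2^(n+1) = 2 * 2^n := by ring
            omega
          rw [if_pos h1, h3]
          filter_upwards [ihval j h5] with ω e1
          rw [e1]
          have hk' : (k:ℝ) = 2 * j := by push_cast [hj]; ring
          rw [hk']
          push_cast
          ring
        · have h1 : ¬ (k % 2 = 0) := by omega
          have h3 : k / 2 = j := by omega
          have h5 : j + 1 ≤ 2^n := by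
            have : 2^(n+1) = 2 * 2^n := by ring
            omega
          rw [if_neg h1, h3]
          have hdisj : Disjoint (Sf n j) (hs (Sf n (j+1) \ Sf n j)) :=
            (disjoint_sdiff_right).mono_right (hHsub j)
          have e0 : ci F1 P (Sf n j ∪ hs (Sf n (j+1) \ Sf n j)) =ᵐ[P]
              ci F1 P (Sf n j) + ci F1 P (hs (Sf n (j+1) \ Sf n j)) :=
            ci_union hle (ihm j) (hHm j) hdisj
          filter_upwards [e0, ihval j (by omega), hHval j h5] with ω e1 e2 e3
          rw [e1]
          simp only [Pi.add_apply]
          rw [e2, e3]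
          have hk' : (k:ℝ) = 2 * j + 1 := by push_cast [hj]; ring
          rw [hk']
          push_cast
          ring
  refine ⟨Sf, fun n => (main n).1, fun n => (main n).2.1, fun n => (main n).2.2.1,
    fun n => (main n).2.2.2.1, fun n => (main n).2.2.2.2, fun n k => ?_⟩
  rw [hstep]
  have h1 : (2*k) % 2 = 0 := by omega
  have h2 : (2*k) / 2 = k := by omega
  simp [h1, h2]


lemma exists_uniform (hatom : CondAtomless' F1 F2 P) :
    ∃ U : Ω → ℝ, Measurable[F2] U ∧ (∀ ω, 0 ≤ U ω ∧ U ω ≤ 1) ∧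
      (∀ (y : ℝ) (C : Set Ω), MeasurableSet[F1] C →
        P ({ω | U ω ≤ y} ∩ C) = ENNReal.ofReal (max 0 (min y 1)) * P C) := by
  classical
  obtain ⟨S, hSm, hSmono', hS0, hSuniv, hSval, hScons⟩ := dyadic hle hatom
  have hSmono : ∀ n, Monotone (S n) := fun n => monotone_nat_of_le_succ (hSmono' n)
  have hexist : ∀ n ω, ∃ k, ω ∈ S n k := fun n ω =>
    ⟨2^n, by rw [hSuniv n _ le_rfl]; trivial⟩
  set N : ℕ → Ω → ℕ := fun n ω => Nat.find (hexist n ω) with hN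
  have hNmem : ∀ n ω, ω ∈ S n (N n ω) := fun n ω => Nat.find_spec (hexist n ω)
  have hNle_iff : ∀ n ω k, N n ω ≤ k ↔ ω ∈ S n k := by
    intro n ω k
    rw [hN]
    simp only [Nat.find_le_iff]
    constructor
    · rintro ⟨m, hm, hmem⟩
      exact hSmono n hm hmem
    · intro h
      exact ⟨k, le_rfl, h⟩
  have hN1 : ∀ n ω, 1 ≤ N n ω := by
    intro n ω
    by_contra h
    push_neg at h
    have h0 : N n ω = 0 := by omega
    have hm := hNmem n ω
    rw [h0, hS0] at hm
    exact Set.notMem_empty ω hm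
  have hNle2 : ∀ n ω, N n ω ≤ 2^n := fun n ω =>
    (hNle_iff n ω (2^n)).mpr (by rw [hSuniv n _ le_rfl]; trivial)
  have hNmeas : ∀ n, Measurable[F2] (N n) := by
    intro n
    refine measurable_to_countable' fun k => ?_
    rcases Nat.eq_zero_or_pos k with rfl | hk
    · have : (N n) ⁻¹' {0} = ∅ := by
        ext ω
        simp only [Set.mem_preimage, Set.mem_singleton_iff, Set.mem_empty_iff_false, iff_false]
        have := hN1 n ω
        omega
      rw [this]
      exact MeasurableSet.empty
    · have : (N n) ⁻¹' {k} = S n k \ S n (k-1) := by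
        ext ω
        simp only [Set.mem_preimage, Set.mem_singleton_iff, Set.mem_diff]
        rw [← hNle_iff n ω k, ← hNle_iff n ω (k-1)]
        omega
      rw [this]
      exact (hSm n k).diff (hSm n (k-1))
  set f : ℕ → Ω → ℝ := fun n ω => (N n ω : ℝ) / 2^n with hf
  have hfmeas : ∀ n, Measurable[F2] (f n) := fun n =>
    (measurable_from_top.comp (hNmeas n)).div_const _
  have hfnonneg : ∀ n ω, 0 ≤ f n ω := fun n ω => by positivity
  have hfanti : ∀ ω, Antitone fun n => f n ω := by
    intro ω
    refine antitone_nat_of_succ_le fun n => ?_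
    have hmem : ω ∈ S (n+1) (2 * N n ω) := by
      rw [hScons]
      exact hNmem n ω
    have h1 : N (n+1) ω ≤ 2 * N n ω := (hNle_iff (n+1) ω _).mpr hmem
    rw [hf]
    simp only
    rw [div_le_div_iff₀ (by positivity) (by positivity)]
    have : ((N (n+1) ω : ℝ)) ≤ 2 * N n ω := by exact_mod_cast h1
    calc ((N (n+1) ω : ℝ)) * 2^n ≤ (2 * N n ω) * 2^n :=
          mul_le_mul_of_nonneg_right this (by positivity)
      _ = (N n ω : ℝ) * 2^(n+1) := by ring
  have hbdd : ∀ ω, BddBelow (Set.range fun n => f n ω) :=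
    fun ω => ⟨0, by rintro x ⟨n, rfl⟩; exact hfnonneg n ω⟩
  set U : Ω → ℝ := fun ω => ⨅ n, f n ω with hU
  have hUmeas : Measurable[F2] U := Measurable.iInf hfmeas
  have hU0 : ∀ ω, 0 ≤ U ω := fun ω => le_ciInf fun n => hfnonneg n ω
  have hU1 : ∀ ω, U ω ≤ 1 := by
    intro ω
    refine le_trans (ciInf_le (hbdd ω) 0) ?_
    rw [hf]
    simp only [pow_zero, div_one]
    exact_mod_cast hNle2 0 ω
  -- value of P (S n k ∩ C)
  have hval : ∀ n k, k ≤ 2^n → ∀ C : Set Ω, MeasurableSet[F1] C →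
      (P (S n k ∩ C)).toReal = (k:ℝ)/2^n * (P C).toReal := by
    intro n k hk C hC
    have h1 := setIntegral_ci (P := P) hle (hSm n k) hC
    have h2 : ∫ ω in C, ci F1 P (S n k) ω ∂P = ∫ _ω in C, ((k:ℝ)/2^n) ∂P :=
      setIntegral_congr_ae (hle _ hC) ((hSval n k hk).mono fun ω h _ => h)
    rw [h2, setIntegral_const, smul_eq_mul, measureReal_def] at h1
    rw [← h1]
    ring
  -- key1 : strict inequality measure
  have key1 : ∀ x : ℝ, 0 < x → x ≤ 1 → ∀ C : Set Ω, MeasurableSet[F1] C →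
      (P ({ω | U ω < x} ∩ C)).toReal = x * (P C).toReal := by
    intro x hx0 hx1 C hC
    have hset : {ω | U ω < x} = ⋃ n, {ω | f n ω < x} := by
      ext ω
      simp only [Set.mem_setOf_eq, Set.mem_iUnion, hU]
      exact ciInf_lt_iff (hbdd ω)
    have hceil_pos : ∀ n : ℕ, 1 ≤ ⌈x * 2^n⌉₊ := by
      intro n
      rw [Nat.one_le_ceil_iff]
      positivity
    have hfn : ∀ n, {ω | f n ω < x} = S n (⌈x * 2^n⌉₊ - 1) := by
      intro n
      ext ω
      simp only [Set.mem_setOf_eq, hf]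
      rw [div_lt_iff₀ (by positivity), ← hNle_iff n ω]
      constructor
      · intro h
        have : N n ω < ⌈x * 2^n⌉₊ := Nat.lt_ceil.mpr h
        omega
      · intro h
        have h2 : N n ω < ⌈x * 2^n⌉₊ := by
          have := hceil_pos n
          omega
        exact Nat.lt_ceil.mp h2
    have hkle : ∀ n : ℕ, ⌈x * 2^n⌉₊ - 1 ≤ 2^n := by
      intro n
      have : ⌈x * 2^n⌉₊ ≤ 2^n := by
        refine Nat.ceil_le.mpr ?_
        push_cast
        nlinarith [pow_pos (show (0:ℝ) < 2 by norm_num) n]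
      omega
    have hmonoset : Monotone fun n => {ω | f n ω < x} ∩ C := by
      intro a b hab ω ⟨h1, h2⟩
      exact ⟨lt_of_le_of_lt (hfanti ω hab) h1, h2⟩
    have htend : Tendsto (fun n => P ({ω | f n ω < x} ∩ C)) atTop
        (𝓝 (P ({ω | U ω < x} ∩ C))) := by
      have := tendsto_measure_iUnion_atTop (μ := P) hmonoset
      have heq : (⋃ n, {ω | f n ω < x} ∩ C) = {ω | U ω < x} ∩ C := by
        rw [← Set.iUnion_inter, ← hset]
      rw [heq] at this
      exact this
    have htendR : Tendsto (fun n => (P ({ω | f n ω < x} ∩ C)).toReal) atTop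
        (𝓝 ((P ({ω | U ω < x} ∩ C)).toReal)) :=
      (ENNReal.tendsto_toReal (measure_ne_top _ _)).comp htend
    have hvals : ∀ n, (P ({ω | f n ω < x} ∩ C)).toReal
        = ((⌈x * 2^n⌉₊ - 1 : ℕ):ℝ)/2^n * (P C).toReal := by
      intro n
      rw [hfn n]
      exact hval n _ (hkle n) C hC
    have htendx : Tendsto (fun n : ℕ => ((⌈x * 2^n⌉₊ - 1 : ℕ):ℝ)/2^n * (P C).toReal) atTop
        (𝓝 (x * (P C).toReal)) := by
      have h1 : Tendsto (fun n : ℕ => ((⌈x * 2^n⌉₊ - 1 : ℕ):ℝ)/2^n) atTop (𝓝 x) := by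
        have hle' : ∀ n : ℕ, ((⌈x * 2^n⌉₊ - 1 : ℕ):ℝ)/2^n ≤ x := by
          intro n
          rw [div_le_iff₀ (by positivity), Nat.cast_sub (hceil_pos n)]
          have := Nat.ceil_lt_add_one (show (0:ℝ) ≤ x * 2^n by positivity)
          push_cast
          linarith
        have hge : ∀ n : ℕ, x - (1/2)^n ≤ ((⌈x * 2^n⌉₊ - 1 : ℕ):ℝ)/2^n := by
          intro n
          have h2 : (x * 2^n : ℝ) ≤ ⌈x * 2^n⌉₊ := Nat.le_ceil _
          rw [Nat.cast_sub (hceil_pos n), sub_div]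
          have h3 : ((⌈x * 2^n⌉₊:ℝ)) / 2^n ≥ x := by
            rw [ge_iff_le, le_div_iff₀ (by positivity)]
            exact h2
          have h4 : ((1:ℕ):ℝ) / 2^n = (1/2)^n := by
            push_cast
            rw [div_pow]
            norm_num
          rw [h4]
          linarith
        have h0 : Tendsto (fun n : ℕ => x - (1/2:ℝ)^n) atTop (𝓝 (x - 0)) :=
          tendsto_const_nhds.sub
            (tendsto_pow_atTop_nhds_zero_of_lt_one (by norm_num) (by norm_num))
        rw [sub_zero] at h0
        exact tendsto_of_tendsto_of_tendsto_of_le_of_le h0 tendsto_const_nhds hge hle'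
      exact h1.mul_const _
    simp_rw [hvals] at htendR
    exact tendsto_nhds_unique htendR htendx
  have key2 : ∀ x : ℝ, ∀ C : Set Ω, MeasurableSet[F1] C →
      (P ({ω | U ω < x} ∩ C)).toReal = (max 0 (min x 1)) * (P C).toReal := by
    intro x C hC
    rcases le_or_gt x 0 with hx | hx
    · have hempty : {ω | U ω < x} ∩ C = ∅ := by
        ext ω
        simp only [Set.mem_inter_iff, Set.mem_setOf_eq, Set.mem_empty_iff_false, iff_false]
        rintro ⟨h1, _⟩
        linarith [hU0 ω]
      rw [hempty, min_eq_left (by linarith : x ≤ 1), max_eq_left hx]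
      simp
    · rcases le_or_gt x 1 with hx1 | hx1
      · rw [key1 x hx hx1 C hC, min_eq_left hx1, max_eq_right hx.le]
      · have huniv : {ω | U ω < x} = univ :=
          Set.eq_univ_of_forall fun ω => lt_of_le_of_lt (hU1 ω) hx1
        rw [huniv, Set.univ_inter, min_eq_right hx1.le, max_eq_right zero_le_one, one_mul]
  have key3R : ∀ y : ℝ, ∀ C : Set Ω, MeasurableSet[F1] C →
      (P ({ω | U ω ≤ y} ∩ C)).toReal = (max 0 (min y 1)) * (P C).toReal := by
    intro y C hC
    have hinter : {ω | U ω ≤ y} ∩ C = ⋂ j : ℕ, ({ω | U ω < y + 1/(j+1)} ∩ C) := by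
      ext ω
      simp only [Set.mem_inter_iff, Set.mem_setOf_eq, Set.mem_iInter]
      constructor
      · rintro ⟨h1, h2⟩ j
        refine ⟨lt_of_le_of_lt h1 ?_, h2⟩
        have : (0:ℝ) < 1/(j+1) := by positivity
        linarith
      · intro h
        refine ⟨?_, (h 0).2⟩
        by_contra hc
        push_neg at hc
        obtain ⟨j, hj⟩ := exists_nat_one_div_lt (by linarith : (0:ℝ) < U ω - y)
        linarith [(h j).1]
    have hanti : Antitone fun j : ℕ => {ω | U ω < y + 1/(j+1)} ∩ C := by
      intro a b hab
      refine Set.inter_subset_inter ?_ subset_rfl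
      intro ω hω
      simp only [Set.mem_setOf_eq] at *
      have hab' : (a:ℝ) ≤ b := Nat.cast_le.mpr hab
      have : (1:ℝ)/(b+1) ≤ 1/(a+1) :=
        one_div_le_one_div_of_le (by positivity) (by linarith)
      linarith
    have htendm : Tendsto (fun j : ℕ => P ({ω | U ω < y + 1/(j+1)} ∩ C)) atTop
        (𝓝 (P ({ω | U ω ≤ y} ∩ C))) := by
      have := tendsto_measure_iInter_atTop (μ := P)
        (fun j => ((hUmeas measurableSet_Iio).inter (hle _ hC)).nullMeasurableSet)
        hanti ⟨0, measure_ne_top _ _⟩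
      rw [hinter]
      exact this
    have htendR : Tendsto (fun j : ℕ => (P ({ω | U ω < y + 1/(j+1)} ∩ C)).toReal) atTop
        (𝓝 ((P ({ω | U ω ≤ y} ∩ C)).toReal)) :=
      (ENNReal.tendsto_toReal (measure_ne_top _ _)).comp htendm
    have hvals : ∀ j : ℕ, (P ({ω | U ω < y + 1/(j+1)} ∩ C)).toReal
        = (max 0 (min (y + 1/(j+1)) 1)) * (P C).toReal := fun j => key2 _ C hC
    have hcont : Tendsto (fun j : ℕ => y + 1/(j+1:ℝ)) atTop (𝓝 y) := by
      have := tendsto_const_nhds (x := y) (f := atTop (α := ℕ)) |>.add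
        tendsto_one_div_add_atTop_nhds_zero_nat
      rw [add_zero] at this
      exact this
    have hcontf : Continuous fun t : ℝ => max 0 (min t 1) * (P C).toReal :=
      (continuous_const.max (continuous_id.min continuous_const)).mul continuous_const
    have htendx : Tendsto (fun j : ℕ => (max 0 (min (y + 1/(j+1)) 1)) * (P C).toReal) atTop
        (𝓝 ((max 0 (min y 1)) * (P C).toReal)) := (hcontf.tendsto y).comp hcont
    simp_rw [hvals] at htendR
    exact tendsto_nhds_unique htendR htendx
  refine ⟨U, hUmeas, fun ω => ⟨hU0 ω, hU1 ω⟩, fun y C hC => ?_⟩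
  have h1 := key3R y C hC
  have hfin1 : P ({ω | U ω ≤ y} ∩ C) ≠ ⊤ := measure_ne_top _ _
  have hfin2 : ENNReal.ofReal (max 0 (min y 1)) * P C ≠ ⊤ :=
    ENNReal.mul_ne_top ENNReal.ofReal_ne_top (measure_ne_top _ _)
  rw [← ENNReal.toReal_eq_toReal_iff' hfin1 hfin2, ENNReal.toReal_mul,
    ENNReal.toReal_ofReal (le_max_left _ _)]
  exact h1

end Basics

theorem stmt3 {Ω : Type*} (F1 F2 : MeasurableSpace Ω) (hle : F1 ≤ F2)
    (P : @Measure Ω F2) (hP : @IsProbabilityMeasure Ω F2 P)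
    (hatomless : CondAtomless F1 F2 P) :
    ∃ U : Ω → ℝ, Measurable[F2] U ∧
      Measure.map U P = volume.restrict (Set.Icc (0 : ℝ) 1) ∧
      ProbabilityTheory.Indep (MeasurableSpace.comap U Real.measurableSpace) F1 P := by
  haveI := hP
  have hatom : CondAtomless' F1 F2 P := hatomless
  obtain ⟨U, hUmeas, hU01, hkey⟩ := exists_uniform hle hatom
  have hkey_univ : ∀ y : ℝ, P {ω | U ω ≤ y} = ENNReal.ofReal (max 0 (min y 1)) := by
    intro y
    have := hkey y univ (@MeasurableSet.univ Ω F1)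
    rw [Set.inter_univ, measure_univ, mul_one] at this
    exact this
  have hofReal : ∀ a : ℝ, ENNReal.ofReal (max 0 (min a 1)) = ENNReal.ofReal (min a 1) := by
    intro a
    rcases le_total (min a 1) 0 with h | h
    · rw [max_eq_left h, ENNReal.ofReal_of_nonpos h]
      simp
    · rw [max_eq_right h]
  haveI : IsProbabilityMeasure (Measure.map U P) :=
    Measure.isProbabilityMeasure_map hUmeas.aemeasurable
  refine ⟨U, hUmeas, ?_, ?_⟩
  · refine Measure.ext_of_Iic (Measure.map U P) _ fun a => ?_
    rw [Measure.map_apply hUmeas measurableSet_Iic]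
    have hpre : U ⁻¹' (Iic a) = {ω | U ω ≤ a} := rfl
    rw [hpre, hkey_univ a, Measure.restrict_apply measurableSet_Iic]
    have hicc : Iic a ∩ Icc (0:ℝ) 1 = Icc 0 (min a 1) := by
      ext x
      simp only [Set.mem_inter_iff, Set.mem_Iic, Set.mem_Icc, le_min_iff]
      constructor
      · rintro ⟨h1, h2, h3⟩
        exact ⟨h2, h1, h3⟩
      · rintro ⟨h1, h2, h3⟩
        exact ⟨h2, h1, h3⟩
    rw [hicc, Real.volume_Icc, sub_zero, hofReal a]
  · set p1 : Set (Set Ω) := (fun s => U ⁻¹' s) '' (Set.range (Iic : ℝ → Set ℝ)) with hp1def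
    have hR : (Real.measurableSpace : MeasurableSpace ℝ)
        = MeasurableSpace.generateFrom (Set.range (Iic : ℝ → Set ℝ)) :=
      (BorelSpace.measurable_eq (α := ℝ)).trans (borel_eq_generateFrom_Iic ℝ)
    have hcomap : MeasurableSpace.comap U Real.measurableSpace
        = MeasurableSpace.generateFrom p1 := by
      rw [hR, MeasurableSpace.comap_generateFrom]
    have hp1 : IsPiSystem p1 := by
      rintro s ⟨s1, ⟨a, rfl⟩, rfl⟩ t ⟨t1, ⟨b, rfl⟩, rfl⟩ _
      refine ⟨Iic (min a b), ⟨min a b, rfl⟩, ?_⟩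
      rw [← Set.preimage_inter, Set.Iic_inter_Iic]
    have hp2 : IsPiSystem {s : Set Ω | MeasurableSet[F1] s} := @MeasurableSpace.isPiSystem_measurableSet Ω F1
    have hpm2 : F1 = MeasurableSpace.generateFrom {s : Set Ω | MeasurableSet[F1] s} :=
      (@MeasurableSpace.generateFrom_measurableSet Ω F1).symm
    refine ProbabilityTheory.IndepSets.indep (hUmeas.comap_le) hle hp1 hp2 hcomap hpm2 ?_
    rw [ProbabilityTheory.IndepSets_iff]
    rintro s t ⟨s1, ⟨a, rfl⟩, rfl⟩ ht
    show P ({ω | U ω ≤ a} ∩ t) = P {ω | U ω ≤ a} * P t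
    rw [hkey a t ht, hkey_univ a]
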